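/- A maximal clique S of the parallelism relation is a top direction (its lines lie on a common plane) if and only if it satisfies condition (*): every two distinct proper lines, each sharing two distinct points with lines of S, either intersect each other or are parallel. Consequently star directions are definable in terms of the complement of W in P. -/

import Mathlib

/-- A projective space of dimension at least 3, given by its point set `S` and its
set of lines: any two points lie on a unique line, the Veblen (Pasch) axiom holds,
and there exist two disjoint lines (dimension ≥ 3). -/
structure ProjSpace (S : Type*) where
  L : Set (Set S)
  two_points : ∀ k ∈ L, ∃ a ∈ k, ∃ b ∈ k, a ≠ b
  unique_meet : ∀ k ∈ L, ∀ l ∈ L, k ≠ l → (k ∩ l).Subsingleton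
  join : ∀ a b : S, a ≠ b → ∃ k ∈ L, a ∈ k ∧ b ∈ k
  veblen : ∀ l₁ ∈ L, ∀ l₂ ∈ L, ∀ l₃ ∈ L, ∀ l₄ ∈ L, ∀ p a b c d : S,
    l₁ ≠ l₂ → p ≠ a → p ≠ b → p ≠ c → p ≠ d →
    p ∈ l₁ → a ∈ l₁ → c ∈ l₁ → p ∈ l₂ → b ∈ l₂ → d ∈ l₂ →
    a ∈ l₃ → b ∈ l₃ → c ∈ l₄ → d ∈ l₄ → (l₃ ∩ l₄).Nonempty
  dim3 : ∃ k ∈ L, ∃ l ∈ L, k ∩ l = ∅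

namespace ProjSpace

variable {S : Type*}

/-- A subspace: any line through two of its points is contained in it. -/
def IsSubspace (P : ProjSpace S) (X : Set S) : Prop :=
  ∀ k ∈ P.L, ∀ a ∈ k, ∀ b ∈ k, a ≠ b → a ∈ X → b ∈ X → k ⊆ X

/-- The subspace spanned by a point set. -/
def span (P : ProjSpace S) (X : Set S) : Set S :=
  ⋂₀ {Y | P.IsSubspace Y ∧ X ⊆ Y}

/-- A plane: the span of a line together with a point outside it. -/
def IsPlane (P : ProjSpace S) (Pl : Set S) : Prop :=
  ∃ k ∈ P.L, ∃ a, a ∉ k ∧ Pl = P.span (insert a k)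

/-- `HasIndex P W lam`: some line has exactly `lam` points in `W` and every line not
contained in `W` has at most `lam` points in `W`. -/
def HasIndex (P : ProjSpace S) (W : Set S) (lam : ℕ) : Prop :=
  (∃ k ∈ P.L, (k ∩ W).encard = (lam : ℕ∞)) ∧
    ∀ k ∈ P.L, ¬ k ⊆ W → (k ∩ W).encard ≤ (lam : ℕ∞)

/-- Three lines form a triangle: pairwise distinct, pairwise intersecting,
not concurrent. -/
def LineTriangle (P : ProjSpace S) (k₁ k₂ k₃ : Set S) : Prop :=
  k₁ ∈ P.L ∧ k₂ ∈ P.L ∧ k₃ ∈ P.L ∧ k₁ ≠ k₂ ∧ k₁ ≠ k₃ ∧ k₂ ≠ k₃ ∧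
    (k₁ ∩ k₂).Nonempty ∧ (k₁ ∩ k₃).Nonempty ∧ (k₂ ∩ k₃).Nonempty ∧
    ¬ (k₁ ∩ k₂ ∩ k₃).Nonempty

/-- Parallelism w.r.t. the horizon `W`: the lines meet, and only inside `W`. -/
def Par (W : Set S) (k₁ k₂ : Set S) : Prop :=
  (k₁ ∩ k₂).Nonempty ∧ k₁ ∩ k₂ ⊆ W

end ProjSpace

namespace ProjSpace

variable {S : Type*}

/-- A clique of the parallelism relation: a set of proper lines that are pairwise
parallel. -/
def IsParClique (P : ProjSpace S) (W : Set S) (C : Set (Set S)) : Prop :=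
  C ⊆ P.L ∧ (∀ k ∈ C, ¬ k ⊆ W) ∧ ∀ k ∈ C, ∀ l ∈ C, k ≠ l → Par W k l

/-- A maximal clique of the parallelism relation. -/
def IsMaxParClique (P : ProjSpace S) (W : Set S) (C : Set (Set S)) : Prop :=
  IsParClique P W C ∧ ∀ C', IsParClique P W C' → C ⊆ C' → C' = C

/-- A star direction: all lines of the clique pass through a common improper point. -/
def IsStarDirection (P : ProjSpace S) (W : Set S) (C : Set (Set S)) : Prop :=
  IsMaxParClique P W C ∧ ∃ a ∈ W, ∀ k ∈ C, a ∈ k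

/-- A top direction: all lines of the clique are contained in a common proper plane. -/
def IsTopDirection (P : ProjSpace S) (W : Set S) (C : Set (Set S)) : Prop :=
  IsMaxParClique P W C ∧ ∃ Pl : Set S, P.IsPlane Pl ∧ ¬ Pl ⊆ W ∧ ∀ k ∈ C, k ⊆ Pl

end ProjSpace

namespace ProjSpaceAux

open ProjSpace Set

variable {S : Type*}

lemma eq_of_two (P : ProjSpace S) {k l : Set S} (hk : k ∈ P.L) (hl : l ∈ P.L)
    {a b : S} (hak : a ∈ k) (hal : a ∈ l) (hbk : b ∈ k) (hbl : b ∈ l) (hab : a ≠ b) :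
    k = l := by
  by_contra h
  exact hab (P.unique_meet k hk l hl h ⟨hak, hal⟩ ⟨hbk, hbl⟩)

lemma span_isSubspace (P : ProjSpace S) (X : Set S) : P.IsSubspace (P.span X) := by
  intro l hl a ha b hb hab haX hbX x hx Y hY
  exact hY.1 l hl a ha b hb hab (haX Y hY) (hbX Y hY) hx

lemma subset_span (P : ProjSpace S) (X : Set S) : X ⊆ P.span X :=
  fun _ hx _ hY => hY.2 hx

lemma span_le (P : ProjSpace S) {X Y : Set S} (hY : P.IsSubspace Y) (hXY : X ⊆ Y) :
    P.span X ⊆ Y := fun x hx => hx Y ⟨hY, hXY⟩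

/-- Candidate description of the plane spanned by `a` and `k`. -/
def Mset (P : ProjSpace S) (k : Set S) (a : S) : Set S :=
  {x | x = a ∨ ∃ m ∈ P.L, a ∈ m ∧ x ∈ m ∧ (m ∩ k).Nonempty}

lemma k_subset_Mset (P : ProjSpace S) {k : Set S} {a : S} (hak : a ∉ k) :
    k ⊆ Mset P k a := by
  intro x hx
  have hxa : x ≠ a := fun h => hak (h ▸ hx)
  obtain ⟨m, hm, ham, hxm⟩ := P.join a x hxa.symm
  exact Or.inr ⟨m, hm, ham, hxm, ⟨x, hxm, hx⟩⟩

/-- Any line with two distinct points in `Mset`, not through `a`, meets `k`. -/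
lemma veblen1 (P : ProjSpace S) {k h : Set S} {a : S} (hk : k ∈ P.L) (hak : a ∉ k)
    (hh : h ∈ P.L) (hah : a ∉ h) {u v : S} (hu : u ∈ h) (hv : v ∈ h) (huv : u ≠ v)
    (huM : u ∈ Mset P k a) (hvM : v ∈ Mset P k a) : (h ∩ k).Nonempty := by
  have hua : u ≠ a := fun e => hah (e ▸ hu)
  have hva : v ≠ a := fun e => hah (e ▸ hv)
  rcases huM with h' | ⟨mu, hmu, hamu, humu, su, hsu⟩
  · exact absurd h' hua
  rcases hvM with h' | ⟨mv, hmv, hamv, hvmv, sv, hsv⟩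
  · exact absurd h' hva
  have hmuv : mu ≠ mv := by
    intro e
    subst e
    exact hah ((eq_of_two P hmu hh humu hu hvmv hv huv) ▸ hamu)
  exact P.veblen mu hmu mv hmv h hh k hk a u v su sv hmuv hua.symm hva.symm
    (fun e => hak (e ▸ hsu.2)) (fun e => hak (e ▸ hsv.2))
    hamu humu hsu.1 hamv hvmv hsv.1 hu hv hsu.2 hsv.2

lemma Mset_subspace (P : ProjSpace S) {k : Set S} {a : S} (hk : k ∈ P.L) (hak : a ∉ k) :
    P.IsSubspace (Mset P k a) := by
  intro l hl u hu v hv huv huM hvM x hx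
  by_cases hal : a ∈ l
  · -- l passes through a; l itself meets k
    have hlk : (l ∩ k).Nonempty := by
      rcases ne_or_eq u a with hua | rfl
      · rcases huM with h' | ⟨m, hm, ham, hum, hs⟩
        · exact absurd h' hua
        · rwa [eq_of_two P hm hl ham hal hum hu (fun e => hua (e.symm)) ] at hs
      · have hva : v ≠ u := huv.symm
        rcases hvM with h' | ⟨m, hm, ham, hvm, hs⟩
        · exact absurd h' hva
        · rwa [eq_of_two P hm hl ham hal hvm hv (fun e => hva e.symm)] at hs
    rcases eq_or_ne x a with rfl | hxa
    · exact Or.inl rfl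
    · exact Or.inr ⟨l, hl, hal, hx, hlk⟩
  · -- l not through a
    by_cases hlk : l = k
    · exact k_subset_Mset P hak (hlk ▸ hx)
    have hua : u ≠ a := fun e => hal (e ▸ hu)
    have hva : v ≠ a := fun e => hal (e ▸ hv)
    obtain ⟨t, htl, htk⟩ := veblen1 P hk hak hl hal hu hv huv huM hvM
    -- pick u' ∈ {u, v} with u' ∉ k
    have hpick : ∃ u', u' ∈ l ∧ u' ∈ Mset P k a ∧ u' ∉ k ∧ u' ≠ a := by
      by_cases huk : u ∈ k
      · refine ⟨v, hv, hvM, fun hvk => hlk (eq_of_two P hl hk hu huk hv hvk huv), hva⟩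
      · exact ⟨u, hu, huM, huk, hua⟩
    obtain ⟨u', hu'l, hu'M, hu'k, hu'a⟩ := hpick
    rcases eq_or_ne x u' with rfl | hxu'
    · exact hu'M
    rcases eq_or_ne x t with rfl | hxt
    · exact k_subset_Mset P hak htk
    have hxa : x ≠ a := fun e => hal (e ▸ hx)
    obtain ⟨n, hn, han, hxn⟩ := P.join a x hxa.symm
    rcases hu'M with h' | ⟨m', hm', ham', hu'm', s, hsm', hsk⟩
    · exact absurd h' hu'a
    have hml : m' ≠ l := fun e => hal (e ▸ ham')
    have hnk : (k ∩ n).Nonempty :=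
      P.veblen m' hm' l hl k hk n hn u' s t a x hml
        (fun e => hu'k (e ▸ hsk)) (fun e => hu'k (e ▸ htk)) hu'a hxu'.symm
        hu'm' hsm' ham' hu'l htl hx hsk htk han hxn
    exact Or.inr ⟨n, hn, han, hxn, by rwa [Set.inter_comm] at hnk⟩

lemma span_subset_Mset (P : ProjSpace S) {k : Set S} {a : S} (hk : k ∈ P.L) (hak : a ∉ k) :
    P.span (insert a k) ⊆ Mset P k a := by
  apply span_le P (Mset_subspace P hk hak)
  intro x hx
  rcases hx with rfl | hx
  · exact Or.inl rfl
  · exact k_subset_Mset P hak hx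

/-- Every line in the plane spanned by `a` and `k` meets `k`. -/
lemma meets_k (P : ProjSpace S) {k : Set S} {a : S} (hk : k ∈ P.L) (hak : a ∉ k)
    {g : Set S} (hg : g ∈ P.L) (hgPl : g ⊆ P.span (insert a k)) : (g ∩ k).Nonempty := by
  have hgM : g ⊆ Mset P k a := hgPl.trans (span_subset_Mset P hk hak)
  obtain ⟨u, hu, v, hv, huv⟩ := P.two_points g hg
  by_cases hgk : g = k
  · exact ⟨u, hu, hgk ▸ hu⟩
  by_cases hag : a ∈ g
  · have : ∃ w, w ∈ g ∧ w ≠ a := by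
      rcases eq_or_ne u a with rfl | hua
      · exact ⟨v, hv, huv.symm⟩
      · exact ⟨u, hu, hua⟩
    obtain ⟨w, hw, hwa⟩ := this
    rcases hgM hw with h' | ⟨m, hm, ham, hwm, hs⟩
    · exact absurd h' hwa
    · rwa [eq_of_two P hm hg ham hag hwm hw hwa.symm] at hs
  · exact veblen1 P hk hak hg hag hu hv huv (hgM hu) (hgM hv)

lemma exists_avoid {k A : Set S} (h : (k ∩ A).encard < k.encard) : ∃ x ∈ k, x ∉ A := by
  by_contra hc
  push_neg at hc
  rw [Set.inter_eq_left.mpr hc] at h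
  exact lt_irrefl _ h

lemma encard_inter_union_le (k A B : Set S) :
    (k ∩ (A ∪ B)).encard ≤ (k ∩ A).encard + (k ∩ B).encard := by
  rw [Set.inter_union_distrib_left]
  exact Set.encard_union_le _ _

/-- A line through `a` in the plane meets any line of the plane not through `a`. -/
lemma meets_through_a (P : ProjSpace S) {k : Set S} {a : S} (hk : k ∈ P.L) (hak : a ∉ k)
    (hbig : ∀ l ∈ P.L, (3 : ℕ∞) < l.encard)
    {g h : Set S} (hg : g ∈ P.L) (hh : h ∈ P.L)
    (hgPl : g ⊆ P.span (insert a k)) (hhPl : h ⊆ P.span (insert a k))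
    (hag : a ∈ g) (hah : a ∉ h) : (g ∩ h).Nonempty := by
  set Pl := P.span (insert a k) with hPl
  by_cases hhk : h = k
  · subst hhk; exact meets_k P hk hak hg hgPl
  obtain ⟨s, hsg, hsk⟩ := meets_k P hk hak hg hgPl
  obtain ⟨t, hth, htk⟩ := meets_k P hk hak hh hhPl
  by_cases htg : t ∈ g
  · exact ⟨t, htg, hth⟩
  have has : a ≠ s := fun e => hak (e ▸ hsk)
  obtain ⟨ls, hls, hals, hsls⟩ := P.join a s has
  have hgh : g ≠ h := fun e => hah (e ▸ hag)
  -- choose b ∈ h avoiding {t}, g, ls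
  have hsub1 : (h ∩ {t}).encard ≤ 1 := by
    apply Set.encard_le_one_iff.mpr
    intro x y hx hy; rw [hx.2, hy.2]
  have hsub2 : (h ∩ g).encard ≤ 1 :=
    Set.encard_le_one_iff.mpr (fun x y hx hy => P.unique_meet h hh g hg hgh.symm hx hy)
  have hsub3 : (h ∩ ls).encard ≤ 1 :=
    Set.encard_le_one_iff.mpr
      (fun x y hx hy => P.unique_meet h hh ls hls (fun e => hah (e ▸ hals)) hx hy)
  have hcard : (h ∩ ({t} ∪ (g ∪ ls))).encard < h.encard := by
    calc (h ∩ ({t} ∪ (g ∪ ls))).encard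
        ≤ (h ∩ {t}).encard + (h ∩ (g ∪ ls)).encard := encard_inter_union_le _ _ _
      _ ≤ (h ∩ {t}).encard + ((h ∩ g).encard + (h ∩ ls).encard) := by
          exact add_le_add le_rfl (encard_inter_union_le _ _ _)
      _ ≤ 1 + (1 + 1) := by
          exact add_le_add hsub1 (add_le_add hsub2 hsub3)
      _ = 3 := by norm_num
      _ < h.encard := hbig h hh
  obtain ⟨b, hbh, hbA⟩ := exists_avoid hcard
  have hbt : b ≠ t := fun e => hbA (Or.inl (by simp [e]))
  have hbg : b ∉ g := fun e => hbA (Or.inr (Or.inl e))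
  have hbls : b ∉ ls := fun e => hbA (Or.inr (Or.inr e))
  have hbk : b ∉ k := by
    intro hbk'
    exact hbt (P.unique_meet h hh k hk hhk ⟨hbh, hbk'⟩ ⟨hth, htk⟩)
  have hba : b ≠ a := fun e => hah (e ▸ hbh)
  obtain ⟨n, hn, han, hbn⟩ := P.join a b hba.symm
  have haPl : a ∈ Pl := subset_span P _ (Or.inl rfl)
  have hnPl : n ⊆ Pl :=
    span_isSubspace P _ n hn a han b hbn hba.symm haPl (hhPl hbh)
  obtain ⟨p, hpn, hpk⟩ := meets_k P hk hak hn hnPl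
  have hpa : p ≠ a := fun e => hak (e ▸ hpk)
  have hpb : p ≠ b := fun e => hbk (e ▸ hpk)
  have hps : p ≠ s := by
    intro e
    subst e
    have : n = ls := eq_of_two P hn hls han hals hpn hsls has
    exact hbls (this ▸ hbn)
  have hpt : p ≠ t := by
    intro e
    subst e
    exact hah ((eq_of_two P hn hh hbn hbh hpn hth hbt) ▸ han)
  have hnk : n ≠ k := fun e => hak (e ▸ han)
  exact P.veblen n hn k hk g hg h hh p a s b t hnk hpa hps hpb hpt
    hpn han hbn hpk hsk htk hag hsg hbh hth


/-- Any two distinct lines of a plane meet. -/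
lemma lines_meet (P : ProjSpace S) {k : Set S} {a : S} (hk : k ∈ P.L) (hak : a ∉ k)
    (hbig : ∀ l ∈ P.L, (3 : ℕ∞) < l.encard)
    {g h : Set S} (hg : g ∈ P.L) (hh : h ∈ P.L)
    (hgPl : g ⊆ P.span (insert a k)) (hhPl : h ⊆ P.span (insert a k)) :
    (g ∩ h).Nonempty := by
  by_cases hag : a ∈ g
  · by_cases hah : a ∈ h
    · exact ⟨a, hag, hah⟩
    · exact meets_through_a P hk hak hbig hg hh hgPl hhPl hag hah
  · by_cases hah : a ∈ h
    · obtain ⟨x, hx1, hx2⟩ := meets_through_a P hk hak hbig hh hg hhPl hgPl hah hag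
      exact ⟨x, hx2, hx1⟩
    · obtain ⟨e₁, he₁, e₂, he₂, he12⟩ := P.two_points g hg
      have he₁a : e₁ ≠ a := fun e => hag (e ▸ he₁)
      have he₂a : e₂ ≠ a := fun e => hag (e ▸ he₂)
      obtain ⟨m₁, hm₁, ham₁, he₁m₁⟩ := P.join a e₁ he₁a.symm
      obtain ⟨m₂, hm₂, ham₂, he₂m₂⟩ := P.join a e₂ he₂a.symm
      have haPl : a ∈ P.span (insert a k) := subset_span P _ (Or.inl rfl)
      have hm₁Pl : m₁ ⊆ P.span (insert a k) :=
        span_isSubspace P _ m₁ hm₁ a ham₁ e₁ he₁m₁ he₁a.symm haPl (hgPl he₁)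
      have hm₂Pl : m₂ ⊆ P.span (insert a k) :=
        span_isSubspace P _ m₂ hm₂ a ham₂ e₂ he₂m₂ he₂a.symm haPl (hgPl he₂)
      obtain ⟨r₁, hr₁m, hr₁h⟩ := meets_through_a P hk hak hbig hm₁ hh hm₁Pl hhPl ham₁ hah
      obtain ⟨r₂, hr₂m, hr₂h⟩ := meets_through_a P hk hak hbig hm₂ hh hm₂Pl hhPl ham₂ hah
      have hm12 : m₁ ≠ m₂ := by
        intro e
        subst e
        exact hag ((eq_of_two P hm₁ hg he₁m₁ he₁ he₂m₂ he₂ he12) ▸ ham₁)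
      exact P.veblen m₁ hm₁ m₂ hm₂ g hg h hh a e₁ e₂ r₁ r₂ hm12
        he₁a.symm he₂a.symm (fun e => hah (e ▸ hr₁h)) (fun e => hah (e ▸ hr₂h))
        ham₁ he₁m₁ hr₁m ham₂ he₂m₂ hr₂m he₁ he₂ hr₁h hr₂h

end ProjSpaceAux

open ProjSpaceAux in
open ProjSpace in
/-- a maximal parallelism clique is a top direction iff it satisfies
condition (*): any two distinct proper lines, each sharing two distinct points with
lines of the clique, intersect in a proper point or are parallel. -/
theorem top_direction_characterization {S : Type*} (P : ProjSpace S) (W : Set S)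
    (lam : ℕ) (hlam : 0 < lam) (hind : P.HasIndex W lam)
    (hsize : ∀ k ∈ P.L, 2 * (lam : ℕ∞) + 2 ≤ k.encard)
    (C : Set (Set S)) (hC : IsMaxParClique P W C) :
    ((∀ l₁ ∈ P.L, ∀ l₂ ∈ P.L, ¬ l₁ ⊆ W → ¬ l₂ ⊆ W → l₁ ≠ l₂ →
        (∃ p ∈ l₁, ∃ q ∈ l₁, p ≠ q ∧ p ∈ ⋃₀ C ∧ q ∈ ⋃₀ C) →
        (∃ p ∈ l₂, ∃ q ∈ l₂, p ≠ q ∧ p ∈ ⋃₀ C ∧ q ∈ ⋃₀ C) →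
        ((∃ x : S, x ∉ W ∧ x ∈ l₁ ∩ l₂) ∨ Par W l₁ l₂)) ↔
      (∃ Pl : Set S, P.IsPlane Pl ∧ ¬ Pl ⊆ W ∧ ∀ k ∈ C, k ⊆ Pl)) := by
  classical
  obtain ⟨⟨hCL, hnW, hpar⟩, hmax⟩ := hC
  have hbig : ∀ l ∈ P.L, (3 : ℕ∞) < l.encard := by
    intro l hl
    refine lt_of_lt_of_le ?_ (hsize l hl)
    have h4 : ((3 : ℕ) : ℕ∞) < ((2 * lam + 2 : ℕ) : ℕ∞) := by
      exact_mod_cast (by omega : 3 < 2 * lam + 2)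
    exact_mod_cast h4
  have hCU : ⋃₀ C ⊆ ⋃₀ C := subset_rfl
  constructor
  · -- (*) → exists plane
    intro hstar
    rcases C.eq_empty_or_nonempty with hCe | ⟨k₁, hk₁C⟩
    · exfalso
      obtain ⟨k, hkL, hkW⟩ := hind.1
      have hknW : ¬ k ⊆ W := by
        intro hsub
        have : (k ∩ W) = k := Set.inter_eq_left.mpr hsub
        have hek : k.encard = (lam : ℕ∞) := by
          conv_lhs => rw [← this]
          exact hkW
        have h1 : 2 * (lam : ℕ∞) + 2 ≤ (lam : ℕ∞) := hek ▸ hsize k hkL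
        have h2 : ((2 * lam + 2 : ℕ) : ℕ∞) ≤ ((lam : ℕ) : ℕ∞) := by
          convert h1 using 2 <;> push_cast <;> ring
        have := (Nat.cast_le (α := ℕ∞)).mp h2
        omega
      have hclique : IsParClique P W {k} := by
        refine ⟨by simp [hkL], by simp [hknW], ?_⟩
        intro k' hk' l' hl' hne
        simp only [Set.mem_singleton_iff] at hk' hl'
        exact absurd (hk'.trans hl'.symm) hne
      have := hmax {k} hclique (hCe ▸ Set.empty_subset _)
      exact (Set.singleton_ne_empty k) (this.trans hCe)
    · have hk₁L : k₁ ∈ P.L := hCL hk₁C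
      by_cases hone : ∀ k₂ ∈ C, k₂ = k₁
      · -- C = {k₁}
        have ⟨a, ha⟩ : ∃ a, a ∉ k₁ := by
          by_contra hna
          push_neg at hna
          obtain ⟨m, hm, n, hn, hmn⟩ := P.dim3
          obtain ⟨u, hu, v, hv, huv⟩ := P.two_points m hm
          obtain ⟨u', hu', v', hv', huv'⟩ := P.two_points n hn
          have hmk : m = k₁ := eq_of_two P hm hk₁L hu (hna u) hv (hna v) huv
          have hnk : n = k₁ := eq_of_two P hn hk₁L hu' (hna u') hv' (hna v') huv'
          have : u ∈ m ∩ n := ⟨hu, by rw [hnk, ← hmk]; exact hu⟩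
          rw [hmn] at this
          exact this
        refine ⟨P.span (insert a k₁), ⟨k₁, hk₁L, a, ha, rfl⟩, ?_, ?_⟩
        · intro hsub
          exact hnW k₁ hk₁C (fun x hx => hsub (subset_span P _ (Or.inr hx)))
        · intro kk hkk
          rw [hone kk hkk]
          exact fun x hx => subset_span P _ (Or.inr hx)
      · push_neg at hone
        obtain ⟨k₂, hk₂C, hk₂ne⟩ := hone
        have hk₂L : k₂ ∈ P.L := hCL hk₂C
        obtain ⟨⟨w, hw⟩, hwsub⟩ := hpar k₂ hk₂C k₁ hk₁C hk₂ne
        -- pick a ∈ k₂ \ k₁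
        have ⟨a, hak₂, hak₁⟩ : ∃ a, a ∈ k₂ ∧ a ∉ k₁ := by
          obtain ⟨u, hu, v, hv, huv⟩ := P.two_points k₂ hk₂L
          by_cases huk : u ∈ k₁
          · refine ⟨v, hv, fun hvk => hk₂ne (eq_of_two P hk₂L hk₁L hu huk hv hvk huv)⟩
          · exact ⟨u, hu, huk⟩
        set Pl := P.span (insert a k₁) with hPldef
        have hPlsub : P.IsSubspace Pl := span_isSubspace P _
        have hk₁Pl : k₁ ⊆ Pl := fun x hx => subset_span P _ (Or.inr hx)
        have haPl : a ∈ Pl := subset_span P _ (Or.inl rfl)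
        have hwPl : w ∈ Pl := hk₁Pl hw.2
        have hwa : w ≠ a := fun e => hak₁ (e ▸ hw.2)
        have hk₂Pl : k₂ ⊆ Pl := hPlsub k₂ hk₂L w hw.1 a hak₂ hwa hwPl haPl
        refine ⟨Pl, ⟨k₁, hk₁L, a, hak₁, rfl⟩, ?_, ?_⟩
        · intro hsub
          exact hnW k₁ hk₁C (fun x hx => hsub (hk₁Pl hx))
        · -- every line of C lies in Pl
          intro k₃ hk₃C
          by_contra hk₃nPl
          have hk₃L : k₃ ∈ P.L := hCL hk₃C
          -- p₁ ∈ k₁ \ W, p₂ ∈ k₂ \ W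
          obtain ⟨p₁, hp₁, hp₁W⟩ := Set.not_subset.mp (hnW k₁ hk₁C)
          obtain ⟨p₂, hp₂, hp₂W⟩ := Set.not_subset.mp (hnW k₂ hk₂C)
          have hp12 : p₁ ≠ p₂ := by
            intro e
            subst e
            exact hp₁W (hwsub ⟨hp₂, hp₁⟩)
          obtain ⟨l₁, hl₁L, hp₁l₁, hp₂l₁⟩ := P.join p₁ p₂ hp12
          have hl₁Pl : l₁ ⊆ Pl :=
            hPlsub l₁ hl₁L p₁ hp₁l₁ p₂ hp₂l₁ hp12 (hk₁Pl hp₁) (hk₂Pl hp₂)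
          have hp₂k₁ : p₂ ∉ k₁ := fun e => hp₂W (hwsub ⟨hp₂, e⟩)
          have hl₁k₁ : l₁ ≠ k₁ := fun e => hp₂k₁ (e ▸ hp₂l₁)
          -- q₁ ∈ k₁ \ (l₁ ∪ W)
          have hcard₁ : (k₁ ∩ (l₁ ∪ W)).encard < k₁.encard := by
            have h1 : (k₁ ∩ l₁).encard ≤ 1 :=
              Set.encard_le_one_iff.mpr
                (fun x y hx hy => P.unique_meet k₁ hk₁L l₁ hl₁L hl₁k₁.symm hx hy)
            have h2 : (k₁ ∩ W).encard ≤ (lam : ℕ∞) := hind.2 k₁ hk₁L (hnW k₁ hk₁C)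
            calc (k₁ ∩ (l₁ ∪ W)).encard
                ≤ (k₁ ∩ l₁).encard + (k₁ ∩ W).encard := encard_inter_union_le _ _ _
              _ ≤ 1 + (lam : ℕ∞) := add_le_add h1 h2
              _ < 2 * (lam : ℕ∞) + 2 := by
                  have : ((1 + lam : ℕ) : ℕ∞) < ((2 * lam + 2 : ℕ) : ℕ∞) := by
                    exact_mod_cast (by omega : 1 + lam < 2 * lam + 2)
                  convert this using 2 <;> push_cast <;> ring
              _ ≤ k₁.encard := hsize k₁ hk₁L
          obtain ⟨q₁, hq₁, hq₁A⟩ := exists_avoid hcard₁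
          have hq₁l₁ : q₁ ∉ l₁ := fun e => hq₁A (Or.inl e)
          have hq₁W : q₁ ∉ W := fun e => hq₁A (Or.inr e)
          -- q₃ ∈ k₃ \ (Pl ∪ W)
          have hk₃Plss : (k₃ ∩ Pl).Subsingleton := by
            intro x hx y hy
            by_contra hxy
            exact hk₃nPl (hPlsub k₃ hk₃L x hx.1 y hy.1 hxy hx.2 hy.2)
          have hcard₃ : (k₃ ∩ (Pl ∪ W)).encard < k₃.encard := by
            have h1 : (k₃ ∩ Pl).encard ≤ 1 :=
              Set.encard_le_one_iff.mpr (fun x y hx hy => hk₃Plss hx hy)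
            have h2 : (k₃ ∩ W).encard ≤ (lam : ℕ∞) := hind.2 k₃ hk₃L (hnW k₃ hk₃C)
            calc (k₃ ∩ (Pl ∪ W)).encard
                ≤ (k₃ ∩ Pl).encard + (k₃ ∩ W).encard := encard_inter_union_le _ _ _
              _ ≤ 1 + (lam : ℕ∞) := add_le_add h1 h2
              _ < 2 * (lam : ℕ∞) + 2 := by
                  have : ((1 + lam : ℕ) : ℕ∞) < ((2 * lam + 2 : ℕ) : ℕ∞) := by
                    exact_mod_cast (by omega : 1 + lam < 2 * lam + 2)
                  convert this using 2 <;> push_cast <;> ring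
              _ ≤ k₃.encard := hsize k₃ hk₃L
          obtain ⟨q₃, hq₃, hq₃A⟩ := exists_avoid hcard₃
          have hq₃Pl : q₃ ∉ Pl := fun e => hq₃A (Or.inl e)
          have hq₃W : q₃ ∉ W := fun e => hq₃A (Or.inr e)
          have hq13 : q₁ ≠ q₃ := fun e => hq₃Pl (e ▸ hk₁Pl hq₁)
          obtain ⟨l₂, hl₂L, hq₁l₂, hq₃l₂⟩ := P.join q₁ q₃ hq13
          have hl₂Pl : ∀ x ∈ l₂, x ∈ Pl → x = q₁ := by
            intro x hx hxPl
            by_contra hxq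
            exact hq₃Pl (hPlsub l₂ hl₂L x hx q₁ hq₁l₂ hxq hxPl (hk₁Pl hq₁) hq₃l₂)
          have hl₁l₂ : l₁ ≠ l₂ := by
            intro e
            exact hq₁l₁ (e ▸ hq₁l₂)
          have hempty : ∀ x, x ∈ l₁ ∩ l₂ → False := by
            intro x hx
            have : x = q₁ := hl₂Pl x hx.2 (hl₁Pl hx.1)
            exact hq₁l₁ (this ▸ hx.1)
          have := hstar l₁ hl₁L l₂ hl₂L
            (fun e => hp₁W (e hp₁l₁)) (fun e => hq₁W (e hq₁l₂)) hl₁l₂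
            ⟨p₁, hp₁l₁, p₂, hp₂l₁, hp12, ⟨k₁, hk₁C, hp₁⟩, ⟨k₂, hk₂C, hp₂⟩⟩
            ⟨q₁, hq₁l₂, q₃, hq₃l₂, hq13, ⟨k₁, hk₁C, hq₁⟩, ⟨k₃, hk₃C, hq₃⟩⟩
          rcases this with ⟨x, _, hx⟩ | ⟨⟨x, hx⟩, _⟩
          · exact hempty x hx
          · exact hempty x hx
  · -- exists plane → (*)
    rintro ⟨Pl, ⟨k, hkL, a, hak, rfl⟩, hPlW, hCPl⟩
    intro l₁ hl₁ l₂ hl₂ h1W h2W hne ⟨p, hp, q, hq, hpq, hpC, hqC⟩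
      ⟨p', hp', q', hq', hpq', hpC', hqC'⟩
    have hUPl : ⋃₀ C ⊆ P.span (insert a k) := Set.sUnion_subset hCPl
    have hl₁Pl : l₁ ⊆ P.span (insert a k) :=
      span_isSubspace P _ l₁ hl₁ p hp q hq hpq (hUPl hpC) (hUPl hqC)
    have hl₂Pl : l₂ ⊆ P.span (insert a k) :=
      span_isSubspace P _ l₂ hl₂ p' hp' q' hq' hpq' (hUPl hpC') (hUPl hqC')
    obtain ⟨x, hx₁, hx₂⟩ := lines_meet P hkL hak hbig hl₁ hl₂ hl₁Pl hl₂Pl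
    by_cases hxW : x ∈ W
    · right
      refine ⟨⟨x, hx₁, hx₂⟩, ?_⟩
      intro y hy
      have : y = x := P.unique_meet l₁ hl₁ l₂ hl₂ hne hy ⟨hx₁, hx₂⟩
      exact this ▸ hxW
    · exact Or.inl ⟨x, hxW, ⟨hx₁, hx₂⟩⟩
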